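/- If G is a finite semiabelian group, then G = AH for some abelian normal subgroup A of G and some proper semiabelian subgroup H of G, unless G is trivial. -/

import Mathlib

open scoped Pointwise

/-- The minimal family of finite groups containing the trivial group, closed under
semidirect products with finite abelian groups, and closed under quotients
(equivalently, surjective homomorphic images). -/
inductive IsSemiabelian : ∀ (G : Type) [Group G], Prop where
  | triv : IsSemiabelian PUnit
  | sdp {A H : Type} [CommGroup A] [Group H] [Finite A] [Finite H]
      (φ : H →* MulAut A) (hH : IsSemiabelian H) : IsSemiabelian (A ⋊[φ] H)
  | quot {G₁ G₂ : Type} [Group G₁] [Group G₂] [Finite G₁] (f : G₁ →* G₂)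
      (hf : Function.Surjective f) (hG : IsSemiabelian G₁) : IsSemiabelian G₂

theorem semiabelian_decomposition_aux (G : Type) [Group G] (hG : IsSemiabelian G) :
    ∀ (G₂ : Type) [Group G₂] (f : G →* G₂), Function.Surjective f → Nontrivial G₂ →
    ∃ A H : Subgroup G₂, A.Normal ∧ IsMulCommutative A ∧ H ≠ ⊤ ∧ IsSemiabelian H ∧
      (A : Set G₂) * (H : Set G₂) = Set.univ := by
  induction hG with
  | triv =>
    intro G₂ _ f hf hnt
    exact absurd (hf.subsingleton) (not_subsingleton_iff_nontrivial.2 hnt ∘ fun h => h)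
  | @sdp A H _ _ _ _ φ hH ih =>
    intro G₂ _ f hf hnt
    by_cases htop : (f.comp (SemidirectProduct.inr : H →* A ⋊[φ] H)).range = ⊤
    · exact ih G₂ (f.comp SemidirectProduct.inr)
        (MonoidHom.range_eq_top.1 htop) hnt
    · refine ⟨(f.comp SemidirectProduct.inl).range, (f.comp SemidirectProduct.inr).range,
        ?_, inferInstance, htop, ?_, ?_⟩
      · have h1 : (f.comp (SemidirectProduct.inl : A →* A ⋊[φ] H)).range
            = (SemidirectProduct.rightHom.ker : Subgroup (A ⋊[φ] H)).map f := by
          rw [← SemidirectProduct.range_inl_eq_ker_rightHom, MonoidHom.range_comp]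
        rw [h1]
        exact Subgroup.Normal.map inferInstance f hf
      · exact IsSemiabelian.quot (f.comp SemidirectProduct.inr).rangeRestrict
          (f.comp SemidirectProduct.inr).rangeRestrict_surjective hH
      · apply Set.eq_univ_of_forall
        intro g
        obtain ⟨x, rfl⟩ := hf g
        rw [← SemidirectProduct.inl_left_mul_inr_right x, map_mul]
        exact Set.mul_mem_mul ⟨x.left, rfl⟩ ⟨x.right, rfl⟩
  | @quot G₁ G₂ _ _ _ f hf hG ih =>
    intro G₃ _ g hg hnt
    exact ih G₃ (g.comp f) (hg.comp hf) hnt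

theorem semiabelian_decomposition (G : Type) [Group G] [Finite G]
    (hG : IsSemiabelian G) (hnt : Nontrivial G) :
    ∃ A H : Subgroup G, A.Normal ∧ IsMulCommutative A ∧ H ≠ ⊤ ∧ IsSemiabelian H ∧
      (A : Set G) * (H : Set G) = Set.univ := by
  exact semiabelian_decomposition_aux G hG G (MonoidHom.id G) Function.surjective_id hnt
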